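/- Fix integers ℓ ≥ 2, τ ≥ 2, 1 ≤ j ≤ ℓ−1, and define h_j(v) = (1/(ℓ−j))·C(ℓ−1,j)·(1−v)^{j−1} v^{ℓ−j−1}(ℓ(1−v) − j) for v ∈ [0,1]. Then |h_j(v)| ≤ √((ℓ−1)/(j(ℓ−j))) for all v ∈ [0,1]. -/

import Mathlib

private lemma bern_term_nonneg (n k : ℕ) (x : ℝ) (h0 : 0 ≤ x) (h1 : x ≤ 1) :
    0 ≤ (n.choose k : ℝ) * x ^ k * (1 - x) ^ (n - k) :=
  mul_nonneg (mul_nonneg (by positivity) (pow_nonneg h0 _)) (pow_nonneg (by linarith) _)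

private lemma bern_le_one (n k : ℕ) (hk : k ≤ n) (x : ℝ) (h0 : 0 ≤ x) (h1 : x ≤ 1) :
    (n.choose k : ℝ) * x ^ k * (1 - x) ^ (n - k) ≤ 1 := by
  have hs : ∑ ν ∈ Finset.range (n + 1), ((n.choose ν : ℝ) * x ^ ν * (1 - x) ^ (n - ν)) = 1 := by
    have h := congrArg (Polynomial.eval x) (bernsteinPolynomial.sum (R := ℝ) n)
    simpa [bernsteinPolynomial, Polynomial.eval_finset_sum] using h
  have h := Finset.single_le_sum (f := fun ν => (n.choose ν : ℝ) * x ^ ν * (1 - x) ^ (n - ν))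
    (fun ν _ => bern_term_nonneg n ν x h0 h1) (Finset.mem_range.mpr (Nat.lt_succ_of_le hk))
  rw [hs] at h
  exact h

private lemma bern_var (n k : ℕ) (hk : k ≤ n) (x : ℝ) (h0 : 0 ≤ x) (h1 : x ≤ 1) :
    ((n : ℝ) * x - k) ^ 2 * ((n.choose k : ℝ) * x ^ k * (1 - x) ^ (n - k))
      ≤ (n : ℝ) * x * (1 - x) := by
  have hs : ∑ ν ∈ Finset.range (n + 1),
      ((n : ℝ) * x - ν) ^ 2 * ((n.choose ν : ℝ) * x ^ ν * (1 - x) ^ (n - ν))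
      = (n : ℝ) * x * (1 - x) := by
    have h := congrArg (Polynomial.eval x) (bernsteinPolynomial.variance (R := ℝ) n)
    simpa [bernsteinPolynomial, Polynomial.eval_finset_sum, mul_comm, mul_assoc, mul_left_comm]
      using h
  have h := Finset.single_le_sum
    (f := fun ν => ((n : ℝ) * x - ν) ^ 2 * ((n.choose ν : ℝ) * x ^ ν * (1 - x) ^ (n - ν)))
    (fun ν _ => mul_nonneg (sq_nonneg _) (bern_term_nonneg n ν x h0 h1))
    (Finset.mem_range.mpr (Nat.lt_succ_of_le hk))
  rw [hs] at h
  exact h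

set_option maxHeartbeats 1000000 in
theorem stmt14 (ℓ τ : ℕ) (hℓ : 2 ≤ ℓ) (hτ : 2 ≤ τ) (j : ℕ) (hj1 : 1 ≤ j) (hj2 : j ≤ ℓ - 1)
    (v : ℝ) (hv : v ∈ Set.Icc (0 : ℝ) 1) :
    |1 / ((ℓ : ℝ) - (j : ℝ)) * (Nat.choose (ℓ - 1) j : ℝ)
        * (1 - v) ^ (j - 1) * v ^ (ℓ - j - 1) * ((ℓ : ℝ) * (1 - v) - (j : ℝ))|
      ≤ Real.sqrt (((ℓ : ℝ) - 1) / ((j : ℝ) * ((ℓ : ℝ) - (j : ℝ)))) := by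
  obtain ⟨hv0, hv1⟩ := hv
  obtain ⟨m, i, rfl, rfl, him⟩ : ∃ m i, ℓ = m + 2 ∧ j = i + 1 ∧ i ≤ m :=
    ⟨ℓ - 2, j - 1, by omega, by omega, by omega⟩
  have e1 : (i + 1) - 1 = i := by omega
  have e2 : (m + 2) - (i + 1) - 1 = m - i := by omega
  have e3 : (m + 2) - 1 = m + 1 := by omega
  rw [e1, e2, e3]
  have castℓ : ((m + 2 : ℕ) : ℝ) = (m : ℝ) + 2 := by push_cast; ring
  have castj : ((i + 1 : ℕ) : ℝ) = (i : ℝ) + 1 := by push_cast; ring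
  rw [castℓ, castj]
  set M : ℝ := (m : ℝ) with hM
  set I : ℝ := (i : ℝ) with hI
  have hIM : I ≤ M := by rw [hM, hI]; exact_mod_cast him
  have hI0 : 0 ≤ I := by rw [hI]; exact Nat.cast_nonneg i
  have hLJ : (M + 2) - (I + 1) = M - I + 1 := by ring
  rw [hLJ, show (M : ℝ) + 2 - 1 = M + 1 from by ring]
  have hsub : ((m - i : ℕ) : ℝ) = M - I := by
    rw [hM, hI, Nat.cast_sub him]
  -- positivity facts
  have hJpos : (0:ℝ) < I + 1 := by linarith
  have hLJpos : (0:ℝ) < M - I + 1 := by linarith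
  have hL1pos : (0:ℝ) < M + 1 := by linarith
  set c : ℝ := (M + 1) / ((I + 1) * (M - I + 1)) with hc
  have hcpos : 0 < c := by positivity
  set c2 : ℝ := (Nat.choose m i : ℝ) with hc2
  set c1 : ℝ := (Nat.choose (m + 1) (i + 1) : ℝ) with hc1
  set c1' : ℝ := (Nat.choose (m + 1) i : ℝ) with hc1'
  set c0 : ℝ := (Nat.choose (m + 2) (i + 1) : ℝ) with hc0
  have hR1 : (M + 1) * c2 = c1 * (I + 1) := by
    rw [hc2, hc1, hM, hI]; exact_mod_cast Nat.add_one_mul_choose_eq m i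
  have hA : (M + 2) * c1' = c0 * (I + 1) := by
    rw [hc1', hc0, hM, hI]
    have := Nat.add_one_mul_choose_eq (m + 1) i
    push_cast [this]
    push_cast
    exact_mod_cast this
  have hB : c1 * (I + 1) = c1' * (M - I + 1) := by
    rw [hc1, hc1', hM, hI]
    have h := Nat.choose_succ_right_eq (m + 1) i
    have h2 : (m + 1) - i = (m - i) + 1 := by omega
    rw [h2] at h
    have h3 := congrArg (fun t : ℕ => (t : ℝ)) h
    push_cast at h3
    rw [hsub] at h3
    rw [hM, hI] at h3
    linarith [h3]
  have hC : (I + 1) * (M - I + 1) * c0 = (M + 2) * (M + 1) * c2 :=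
    calc (I + 1) * (M - I + 1) * c0 = (M - I + 1) * (c0 * (I + 1)) := by ring
      _ = (M - I + 1) * ((M + 2) * c1') := by rw [← hA]
      _ = (M + 2) * (c1' * (M - I + 1)) := by ring
      _ = (M + 2) * (c1 * (I + 1)) := by rw [← hB]
      _ = (M + 2) * ((M + 1) * c2) := by rw [← hR1]
      _ = (M + 2) * (M + 1) * c2 := by ring
  -- abs simplification
  have h1v : (0:ℝ) ≤ 1 - v := by linarith
  have hc1nn : (0:ℝ) ≤ c1 := by rw [hc1]; exact Nat.cast_nonneg _
  have hc2nn : (0:ℝ) ≤ c2 := by rw [hc2]; exact Nat.cast_nonneg _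
  have habs : |1 / (M - I + 1) * c1 * (1 - v) ^ i * v ^ (m - i) * ((M + 2) * (1 - v) - (I + 1))|
      = 1 / (M - I + 1) * c1 * (1 - v) ^ i * v ^ (m - i) * |(M + 2) * (1 - v) - (I + 1)| := by
    rw [abs_mul]
    congr 1
    exact abs_of_nonneg (by positivity)
  rw [habs]
  set D : ℝ := (M + 2) * (1 - v) - (I + 1) with hD
  set P : ℝ := c2 * (1 - v) ^ i * v ^ (m - i) with hP
  have hPnn : 0 ≤ P := by rw [hP]; positivity
  have hP1 : P ≤ 1 := by
    have h := bern_le_one m i him (1 - v) h1v (by linarith)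
    have hx : 1 - (1 - v) = v := by ring
    rw [hx] at h
    rw [hP, hc2]
    exact h
  have hkey : P * |D| ≤ Real.sqrt (1 / c) := by
    rcases eq_or_lt_of_le hv0 with h0 | h0
    · -- v = 0
      have hv' : v = 0 := h0.symm
      rcases eq_or_lt_of_le him with hi | hi
      · -- i = m
        have hMI : M = I := by rw [hM, hI, hi]
        have hP0 : P = 1 := by
          rw [hP, hv', hc2, hi, Nat.choose_self, Nat.sub_self]
          norm_num
        have hD0 : |D| = 1 := by
          rw [hD, hv', hMI]
          norm_num
        rw [hP0, hD0]
        have hcone : 1 / c = 1 := by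
          rw [hc, hMI]
          field_simp
          ring
        rw [hcone, Real.sqrt_one, mul_one]
      · have hP0 : P = 0 := by
          rw [hP, hv', zero_pow (by omega : m - i ≠ 0)]
          ring
        rw [hP0, zero_mul]
        exact Real.sqrt_nonneg _
    rcases eq_or_lt_of_le hv1 with h1 | h1
    · -- v = 1
      rcases Nat.eq_zero_or_pos i with hi | hi
      · have hI0' : I = 0 := by rw [hI, hi]; norm_num
        have hP0 : P = 1 := by
          rw [hP, h1, hc2, hi, Nat.choose_zero_right]
          norm_num
        have hD0 : |D| = 1 := by
          rw [hD, h1, hI0']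
          norm_num
        rw [hP0, hD0]
        have hcone : 1 / c = 1 := by
          rw [hc, hI0']
          field_simp
          ring
        rw [hcone, Real.sqrt_one, mul_one]
      · have hP0 : P = 0 := by
          rw [hP, h1, show (1:ℝ) - 1 = 0 by ring, zero_pow (by omega : i ≠ 0)]
          ring
        rw [hP0, zero_mul]
        exact Real.sqrt_nonneg _
    · -- interior: 0 < v < 1
      have hvar := bern_var (m + 2) (i + 1) (by omega) (1 - v) h1v (by linarith)
      have hx : 1 - (1 - v) = v := by ring
      have hexp : (m + 2) - (i + 1) = (m - i) + 1 := by omega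
      rw [hx, hexp, castℓ, castj] at hvar
      have hav : (0:ℝ) < (1 - v) * v := by
        have hh : (0:ℝ) < 1 - v := by linarith
        positivity
      have h3 : D ^ 2 * (c0 * (1 - v) ^ i * v ^ (m - i)) ≤ M + 2 := by
      -- from hvar
        have h4 : (D ^ 2 * (c0 * (1 - v) ^ i * v ^ (m - i))) * ((1 - v) * v)
            ≤ (M + 2) * ((1 - v) * v) := by
          calc (D ^ 2 * (c0 * (1 - v) ^ i * v ^ (m - i))) * ((1 - v) * v)
              = ((M + 2) * (1 - v) - (I + 1)) ^ 2
                  * (c0 * (1 - v) ^ (i + 1) * v ^ ((m - i) + 1)) := by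
                rw [hD]; ring
            _ ≤ (M + 2) * (1 - v) * v := hvar
            _ = (M + 2) * ((1 - v) * v) := by ring
        exact le_of_mul_le_mul_right h4 hav
      have hPD2 : P * D ^ 2 ≤ 1 / c := by
        have h6 : (M + 2) * (P * D ^ 2 * (M + 1))
            = (I + 1) * (M - I + 1) * (D ^ 2 * (c0 * (1 - v) ^ i * v ^ (m - i))) := by
          rw [hP]
          linear_combination ((1 - v) ^ i * v ^ (m - i) * D ^ 2) * hC.symm
        have h7 : (M + 2) * (P * D ^ 2 * (M + 1)) ≤ (M + 2) * ((I + 1) * (M - I + 1)) := by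
          rw [h6]
          calc (I + 1) * (M - I + 1) * (D ^ 2 * (c0 * (1 - v) ^ i * v ^ (m - i)))
              ≤ (I + 1) * (M - I + 1) * (M + 2) := mul_le_mul_of_nonneg_left h3 (by positivity)
            _ = (M + 2) * ((I + 1) * (M - I + 1)) := by ring
        have h8 : P * D ^ 2 * (M + 1) ≤ (I + 1) * (M - I + 1) :=
          le_of_mul_le_mul_left h7 (by linarith)
        have hinv : 1 / c = (I + 1) * (M - I + 1) / (M + 1) := by
          rw [hc]; field_simp
        rw [hinv, le_div_iff₀ hL1pos]
        linarith [h8]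
      have hsq : (P * |D|) ^ 2 ≤ 1 / c := by
        have he : (P * |D|) ^ 2 = P * (P * D ^ 2) := by
          rw [mul_pow, sq_abs]; ring
        rw [he]
        calc P * (P * D ^ 2) ≤ 1 * (1 / c) := by
              apply mul_le_mul hP1 hPD2 _ zero_le_one
              exact mul_nonneg hPnn (sq_nonneg _)
          _ = 1 / c := by ring
      have h9 := Real.sqrt_le_sqrt hsq
      rwa [Real.sqrt_sq (mul_nonneg hPnn (abs_nonneg _))] at h9
  have hfin : 1 / (M - I + 1) * c1 * (1 - v) ^ i * v ^ (m - i) * |D| = c * (P * |D|) := by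
    have hc1eq : c1 = (M + 1) * c2 / (I + 1) := by
      field_simp
      linarith [hR1]
    rw [hc1eq, hP, hc]
    field_simp
  rw [hfin]
  calc c * (P * |D|) ≤ c * Real.sqrt (1 / c) := mul_le_mul_of_nonneg_left hkey hcpos.le
    _ = Real.sqrt c := by
        have hsne : Real.sqrt c ≠ 0 := by positivity
        rw [one_div, Real.sqrt_inv]
        field_simp
        rw [Real.sq_sqrt hcpos.le]
    _ = Real.sqrt ((M + 1) / ((I + 1) * (M - I + 1))) := by rw [hc]
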